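/- For every integer d ≥ 3, the integral R^hydro_d satisfies R^hydro_d ≤ 8/(d+1). -/

import Mathlib

open Real MeasureTheory

noncomputable def hydroh (t y : ℝ) : ℝ := Real.exp (-(t * (4 * Real.sin (π * y) ^ 2)))

noncomputable def hydrophi (t : ℝ) : ℝ := ∫ y in Set.Icc (0:ℝ) 1, hydroh t y

lemma hydroh_cont (t : ℝ) : Continuous (hydroh t) := by unfold hydroh; fun_prop

lemma hydrophi_nonneg (t : ℝ) : 0 ≤ hydrophi t :=
  setIntegral_nonneg measurableSet_Icc fun y _ => (Real.exp_pos _).le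

lemma hydro_sin_sq_integral : ∫ y in Set.Icc (0:ℝ) 1, Real.sin (π * y) ^ 2 = 1/2 := by
  rw [integral_Icc_eq_integral_Ioc, ← intervalIntegral.integral_of_le zero_le_one]
  rw [intervalIntegral.integral_comp_mul_left (fun x => Real.sin x ^ 2) pi_ne_zero]
  rw [integral_sin_sq]
  simp [Real.sin_pi]
  field_simp

lemma hydro_exp_chord {s : ℝ} (h0 : 0 ≤ s) (h1 : s ≤ 1) : Real.exp (-s) ≤ 1 - s/2 := by
  have hc := convexOn_exp.2 (Set.mem_univ (-1:ℝ)) (Set.mem_univ (0:ℝ)) h0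
    (by linarith : (0:ℝ) ≤ 1 - s) (by ring : s + (1 - s) = 1)
  simp only [smul_eq_mul, mul_neg, mul_one, mul_zero, add_zero, Real.exp_zero] at hc
  have h2 : Real.exp (-1) ≤ 1/2 := by
    rw [Real.exp_neg]
    rw [inv_le_comm₀ (Real.exp_pos 1) (by norm_num)]
    have := Real.add_one_le_exp (1:ℝ)
    linarith
  calc Real.exp (-s) ≤ s * Real.exp (-1) + (1 - s) := by
        convert hc using 2 <;> ring_nf
      _ ≤ s * (1/2) + (1 - s) := by nlinarith
      _ = 1 - s/2 := by ring

lemma hydrophi_le_one_sub {t : ℝ} (h0 : 0 ≤ t) (h1 : t ≤ 1/4) : hydrophi t ≤ 1 - t := by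
  have hint1 : IntegrableOn (hydroh t) (Set.Icc (0:ℝ) 1) := (hydroh_cont t).integrableOn_Icc
  have hint2 : IntegrableOn (fun y => 1 - 2 * t * Real.sin (π * y) ^ 2) (Set.Icc (0:ℝ) 1) := by
    apply Continuous.integrableOn_Icc; fun_prop
  have hmono : hydrophi t ≤ ∫ y in Set.Icc (0:ℝ) 1, (1 - 2 * t * Real.sin (π * y) ^ 2) := by
    apply setIntegral_mono_on hint1 hint2 measurableSet_Icc
    intro y _
    have hs0 : 0 ≤ t * (4 * Real.sin (π * y) ^ 2) := by positivity
    have hs1 : t * (4 * Real.sin (π * y) ^ 2) ≤ 1 := by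
      have : Real.sin (π * y) ^ 2 ≤ 1 := by
        have := Real.neg_one_le_sin (π * y); have := Real.sin_le_one (π * y); nlinarith
      nlinarith
    have := hydro_exp_chord hs0 hs1
    unfold hydroh
    calc Real.exp (-(t * (4 * Real.sin (π * y) ^ 2)))
        ≤ 1 - t * (4 * Real.sin (π * y) ^ 2) / 2 := this
      _ = 1 - 2 * t * Real.sin (π * y) ^ 2 := by ring
  have hsin2 : IntegrableOn (fun y => 2 * t * Real.sin (π * y) ^ 2) (Set.Icc (0:ℝ) 1) := by
    apply Continuous.integrableOn_Icc; fun_prop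
  have hcalc : ∫ y in Set.Icc (0:ℝ) 1, (1 - 2 * t * Real.sin (π * y) ^ 2) = 1 - t := by
    rw [integral_sub (integrableOn_const (by simp) (by simp) : IntegrableOn (fun _ : ℝ => (1:ℝ)) (Set.Icc (0:ℝ) 1) volume) hsin2]
    have : ∫ y in Set.Icc (0:ℝ) 1, 2 * t * Real.sin (π * y) ^ 2
        = 2 * t * ∫ y in Set.Icc (0:ℝ) 1, Real.sin (π * y) ^ 2 := integral_const_mul _ _
    rw [this, hydro_sin_sq_integral]
    simp [Real.volume_Icc]
    ring
  linarith

lemma hydrophi_le_gauss {t : ℝ} (ht : 0 < t) :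
    hydrophi t ≤ Real.sqrt π / (4 * Real.sqrt t) := by
  have hGcont : Continuous fun y : ℝ => Real.exp (-(16*t) * y^2) := by fun_prop
  have key1 : ∫ y in (0:ℝ)..(1/2), hydroh t y ≤ Real.sqrt (π/(16*t)) / 2 := by
    have h1 : ∫ y in (0:ℝ)..(1/2), hydroh t y
        ≤ ∫ y in (0:ℝ)..(1/2), Real.exp (-(16*t) * y^2) := by
      apply intervalIntegral.integral_mono_on (by norm_num)
        ((hydroh_cont t).intervalIntegrable _ _) (hGcont.intervalIntegrable _ _)
      intro y hy
      unfold hydroh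
      apply Real.exp_le_exp.2
      have hy0 : 0 ≤ y := hy.1
      have hsin : 2*y ≤ Real.sin (π*y) := by
        have hpy : π * y ≤ π/2 := by nlinarith [hy.2, Real.pi_pos]
        have := Real.mul_le_sin (x := π*y) (by positivity) hpy
        calc 2*y = 2/π*(π*y) := by field_simp
          _ ≤ Real.sin (π*y) := this
      have hsq : (2*y)^2 ≤ Real.sin (π*y)^2 := pow_le_pow_left₀ (by positivity) hsin 2
      nlinarith
    have h2 : ∫ y in (0:ℝ)..(1/2), Real.exp (-(16*t)*y^2)
        ≤ ∫ y in Set.Ioi (0:ℝ), Real.exp (-(16*t)*y^2) := by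
      rw [intervalIntegral.integral_of_le (by norm_num)]
      exact setIntegral_mono_set (integrable_exp_neg_mul_sq (by positivity)).integrableOn
        (ae_of_all _ fun y => (Real.exp_pos _).le)
        (HasSubset.Subset.eventuallyLE Set.Ioc_subset_Ioi_self)
    rw [integral_gaussian_Ioi] at h2
    linarith
  have hsymm : ∀ y, hydroh t (1 - y) = hydroh t y := by
    intro y; unfold hydroh; rw [mul_sub, mul_one, Real.sin_pi_sub]
  have key2 : ∫ y in (1/2:ℝ)..1, hydroh t y = ∫ y in (0:ℝ)..(1/2), hydroh t y := by
    have h := intervalIntegral.integral_comp_sub_left (a := (1/2:ℝ)) (b := 1) (hydroh t) 1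
    simp only [hsymm] at h
    rw [h]; norm_num
  have hsplit : hydrophi t = (∫ y in (0:ℝ)..(1/2), hydroh t y)
      + ∫ y in (1/2:ℝ)..1, hydroh t y := by
    unfold hydrophi
    rw [integral_Icc_eq_integral_Ioc, ← intervalIntegral.integral_of_le zero_le_one,
      ← intervalIntegral.integral_add_adjacent_intervals (a := (0:ℝ)) (b := 1/2) (c := 1)
        ((hydroh_cont t).intervalIntegrable _ _) ((hydroh_cont t).intervalIntegrable _ _)]
  have hsqrt : Real.sqrt (π/(16*t)) = Real.sqrt π / (4 * Real.sqrt t) := by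
    rw [Real.sqrt_div Real.pi_pos.le, show (16*t:ℝ) = 4^2 * t by ring,
      Real.sqrt_mul (by positivity), Real.sqrt_sq (by norm_num)]
  rw [hsplit, key2]
  rw [hsqrt] at key1
  linarith

lemma hydro_lintegral_exp_Ioi {c : ℝ} (hc : 0 < c) :
    ∫⁻ t in Set.Ioi (0:ℝ), ENNReal.ofReal (Real.exp (-(t * c))) = ENNReal.ofReal c⁻¹ := by
  rw [← ofReal_integral_eq_lintegral_ofReal]
  · congr 1
    have h1 : ∀ t : ℝ, Real.exp (-(t * c)) = (fun u => Real.exp (-u)) (c * t) := by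
      intro t; simp [mul_comm]
    simp_rw [h1]
    rw [MeasureTheory.integral_comp_mul_left_Ioi (fun u => Real.exp (-u)) 0 hc]
    simp [integral_exp_neg_Ioi, integral_exp_Iic_zero]
  · have := exp_neg_integrableOn_Ioi 0 hc
    apply this.congr_fun _ measurableSet_Ioi
    intro t _; simp; ring_nf
  · exact ae_of_all _ fun t => (Real.exp_pos _).le

lemma hydro_inv_le_lintegral {c : ℝ} (hc : 0 ≤ c) :
    ENNReal.ofReal c⁻¹ ≤ ∫⁻ t in Set.Ioi (0:ℝ), ENNReal.ofReal (Real.exp (-(t * c))) := by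
  rcases eq_or_lt_of_le hc with h | h
  · simp [← h]
  · rw [hydro_lintegral_exp_Ioi h]

noncomputable def hydroQ (d : ℕ) (x : Fin d → ℝ) : ℝ := ∑ i, 4 * Real.sin (π * x i) ^ 2

lemma hydroQ_cont (d : ℕ) : Continuous (hydroQ d) := by
  unfold hydroQ
  apply continuous_finset_sum
  intro i _
  have : Continuous fun x : Fin d → ℝ => x i := continuous_apply i
  fun_prop

lemma hydroQ_nonneg (d : ℕ) (x : Fin d → ℝ) : 0 ≤ hydroQ d x := by
  apply Finset.sum_nonneg; intro i _; positivity

lemma hydro_cube_lintegral (d : ℕ) (t : ℝ) :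
    ∫⁻ x in (Set.univ.pi fun _ : Fin d => Set.Icc (0:ℝ) 1),
      ENNReal.ofReal (Real.exp (-(t * hydroQ d x))) = ENNReal.ofReal (hydrophi t ^ d) := by
  set S := Set.univ.pi fun _ : Fin d => Set.Icc (0:ℝ) 1 with hS
  have hScompact : IsCompact S := isCompact_univ_pi fun _ => isCompact_Icc
  have hSmeas : MeasurableSet S := MeasurableSet.univ_pi fun _ => measurableSet_Icc
  have hcont : Continuous fun x : Fin d → ℝ => Real.exp (-(t * hydroQ d x)) := by
    have := hydroQ_cont d; fun_prop
  have hint : IntegrableOn (fun x => Real.exp (-(t * hydroQ d x))) S :=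
    hcont.continuousOn.integrableOn_compact hScompact
  rw [← ofReal_integral_eq_lintegral_ofReal hint (ae_of_all _ fun x => (Real.exp_pos _).le)]
  congr 1
  have hprod : ∀ x : Fin d → ℝ, Real.exp (-(t * hydroQ d x)) = ∏ i, hydroh t (x i) := by
    intro x
    unfold hydroQ hydroh
    rw [Finset.mul_sum, ← Finset.sum_neg_distrib, Real.exp_sum]
  calc ∫ x in S, Real.exp (-(t * hydroQ d x))
      = ∫ x in S, ∏ i, hydroh t (x i) := by
        apply setIntegral_congr_fun hSmeas; intro x _; exact hprod x
    _ = ∫ x : Fin d → ℝ, ∏ i, (Set.indicator (Set.Icc (0:ℝ) 1) (hydroh t)) (x i) := by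
        rw [← integral_indicator hSmeas]
        congr 1
        funext x
        by_cases hx : x ∈ S
        · rw [Set.indicator_of_mem hx]
          exact Finset.prod_congr rfl fun i _ =>
            (Set.indicator_of_mem (hx i (Set.mem_univ i)) _).symm
        · rw [Set.indicator_of_notMem hx]
          rw [hS, Set.mem_univ_pi] at hx
          push_neg at hx
          obtain ⟨i, hi⟩ := hx
          exact (Finset.prod_eq_zero (Finset.mem_univ i)
            (Set.indicator_of_notMem hi _)).symm
    _ = (∫ y : ℝ, (Set.indicator (Set.Icc (0:ℝ) 1) (hydroh t)) y) ^ d := by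
        have := MeasureTheory.integral_fintype_prod_eq_pow (ι := Fin d) (μ := (volume : Measure ℝ))
          (Set.indicator (Set.Icc (0:ℝ) 1) (hydroh t))
        rw [Fintype.card_fin] at this
        exact this
    _ = hydrophi t ^ d := by rw [integral_indicator measurableSet_Icc]; rfl

lemma hydro_tail1 (d : ℕ) :
    ∫⁻ t in Set.Ioc (0:ℝ) (1/4), ENNReal.ofReal (hydrophi t ^ d)
      ≤ ENNReal.ofReal (1/((d:ℝ)+1)) := by
  have step1 : ∫⁻ t in Set.Ioc (0:ℝ) (1/4), ENNReal.ofReal (hydrophi t ^ d)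
      ≤ ∫⁻ t in Set.Ioc (0:ℝ) 1, ENNReal.ofReal ((1-t) ^ d) := by
    calc ∫⁻ t in Set.Ioc (0:ℝ) (1/4), ENNReal.ofReal (hydrophi t ^ d)
        ≤ ∫⁻ t in Set.Ioc (0:ℝ) (1/4), ENNReal.ofReal ((1-t) ^ d) := by
          apply setLIntegral_mono (by fun_prop)
          intro t ht
          exact ENNReal.ofReal_le_ofReal (pow_le_pow_left₀ (hydrophi_nonneg t)
            (hydrophi_le_one_sub ht.1.le ht.2) d)
      _ ≤ ∫⁻ t in Set.Ioc (0:ℝ) 1, ENNReal.ofReal ((1-t) ^ d) :=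
          lintegral_mono_set (Set.Ioc_subset_Ioc_right (by norm_num))
  refine step1.trans ?_
  rw [← ofReal_integral_eq_lintegral_ofReal]
  · apply ENNReal.ofReal_le_ofReal
    rw [← intervalIntegral.integral_of_le zero_le_one]
    rw [intervalIntegral.integral_comp_sub_left (fun u => u ^ d) 1]
    norm_num [integral_pow]
  · apply Continuous.integrableOn_Ioc; fun_prop
  · filter_upwards [ae_restrict_mem measurableSet_Ioc] with t ht
    have : (0:ℝ) ≤ 1 - t := by linarith [ht.2]
    positivity

lemma hydro_tail2 (d : ℕ) (hd : 3 ≤ d) :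
    ∫⁻ t in Set.Ioi (1/4:ℝ), ENNReal.ofReal (hydrophi t ^ d)
      ≤ ENNReal.ofReal (1/(2*((d:ℝ)-2))) := by
  have hd3 : (3:ℝ) ≤ (d:ℝ) := by exact_mod_cast hd
  have ha : -(d:ℝ)/2 < -1 := by linarith
  have step1 : ∫⁻ t in Set.Ioi (1/4:ℝ), ENNReal.ofReal (hydrophi t ^ d)
      ≤ ∫⁻ t in Set.Ioi (1/4:ℝ),
          ENNReal.ofReal ((Real.sqrt π / 4) ^ d * t ^ (-(d:ℝ)/2)) := by
    apply setLIntegral_mono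
    · fun_prop
    intro t ht
    have ht0 : (0:ℝ) < t := lt_trans (by norm_num) ht
    apply ENNReal.ofReal_le_ofReal
    have hb : hydrophi t ^ d ≤ (Real.sqrt π / (4 * Real.sqrt t)) ^ d :=
      pow_le_pow_left₀ (hydrophi_nonneg t) (hydrophi_le_gauss ht0) d
    refine hb.trans (le_of_eq ?_)
    have hsq : Real.sqrt π / (4 * Real.sqrt t) = (Real.sqrt π / 4) * (Real.sqrt t)⁻¹ := by
      field_simp
    rw [hsq, mul_pow]
    congr 1
    rw [← Real.rpow_neg_one (Real.sqrt t), Real.sqrt_eq_rpow,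
      ← Real.rpow_mul ht0.le, ← Real.rpow_natCast (t ^ (1/2 * (-1) : ℝ)) d,
      ← Real.rpow_mul ht0.le]
    norm_num
    ring_nf
  refine step1.trans ?_
  have hint : IntegrableOn (fun t : ℝ => (Real.sqrt π / 4) ^ d * t ^ (-(d:ℝ)/2))
      (Set.Ioi (1/4:ℝ)) :=
    (integrableOn_Ioi_rpow_of_lt ha (by norm_num)).const_mul _
  rw [← ofReal_integral_eq_lintegral_ofReal hint]
  · apply ENNReal.ofReal_le_ofReal
    rw [integral_const_mul, integral_Ioi_rpow_of_lt ha (by norm_num)]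
    have hpow4 : (1/4:ℝ) ^ (-(d:ℝ)/2 + 1) = 2 ^ d / 4 := by
      have h2 : (1/4:ℝ) = (2:ℝ) ^ (-2:ℝ) := by norm_num
      rw [h2, ← Real.rpow_mul (by norm_num : (0:ℝ) ≤ 2)]
      have : (-2:ℝ) * (-(d:ℝ)/2 + 1) = (d:ℝ) - 2 := by ring
      rw [this, Real.rpow_sub (by norm_num : (0:ℝ) < 2), Real.rpow_natCast]
      norm_num
    have hd2 : (0:ℝ) < (d:ℝ) - 2 := by linarith
    have hne : -(d:ℝ)/2 + 1 ≠ 0 := by intro h; linarith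
    have hval : -(1/4:ℝ) ^ (-(d:ℝ)/2 + 1) / (-(d:ℝ)/2 + 1)
        = (2 ^ d / 4) * (2 / ((d:ℝ) - 2)) := by
      rw [hpow4]
      have h84 : (8:ℝ) - (d:ℝ)*4 ≠ 0 := by intro h; linarith
      rw [div_eq_iff hne]
      field_simp [hd2.ne']
      ring
    rw [hval]
    have hsp : Real.sqrt π ≤ 2 := by
      nlinarith [Real.sq_sqrt Real.pi_pos.le, Real.sqrt_nonneg π, Real.pi_le_four]
    have hkey : (Real.sqrt π / 4) ^ d * (2 ^ d / 4) ≤ 1/4 := by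
      have : (Real.sqrt π / 4) ^ d * (2:ℝ) ^ d = (Real.sqrt π / 2) ^ d := by
        rw [← mul_pow]; congr 1; ring
      have hle1 : (Real.sqrt π / 2) ^ d ≤ 1 :=
        pow_le_one₀ (by positivity) (by linarith)
      calc (Real.sqrt π / 4) ^ d * (2 ^ d / 4)
          = (Real.sqrt π / 2) ^ d / 4 := by rw [← this]; ring
        _ ≤ 1/4 := by linarith
    calc (Real.sqrt π / 4) ^ d * ((2 ^ d / 4) * (2 / ((d:ℝ) - 2)))
        = ((Real.sqrt π / 4) ^ d * (2 ^ d / 4)) * (2 / ((d:ℝ) - 2)) := by ring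
      _ ≤ (1/4) * (2 / ((d:ℝ) - 2)) := by
          apply mul_le_mul_of_nonneg_right hkey (by positivity)
      _ = 1/(2*((d:ℝ)-2)) := by field_simp; ring
  · filter_upwards [ae_restrict_mem measurableSet_Ioi] with t ht
    have ht0 : (0:ℝ) < t := lt_trans (by norm_num) ht
    positivity

theorem hydro_upper_bound' (d : ℕ) (hd : 3 ≤ d) :
    (∫ x in (Set.univ.pi fun _ : Fin d => Set.Icc (0 : ℝ) 1),
        (2 * d - 2 * ∑ i, Real.cos (2 * π * x i))⁻¹) ≤ 8 / (d + 1) := by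
  have hd3 : (3:ℝ) ≤ (d:ℝ) := by exact_mod_cast hd
  set S := Set.univ.pi fun _ : Fin d => Set.Icc (0:ℝ) 1 with hS
  have hfun : ∀ x : Fin d → ℝ,
      (2 * (d:ℝ) - 2 * ∑ i, Real.cos (2 * π * x i))⁻¹ = (hydroQ d x)⁻¹ := by
    intro x
    congr 1
    unfold hydroQ
    have hterm : ∀ y : ℝ, 2 - 2 * Real.cos (2 * π * y) = 4 * Real.sin (π * y) ^ 2 := by
      intro y
      have h1 : Real.cos (2 * π * y) = Real.cos (2 * (π * y)) := by ring_nf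
      rw [h1, Real.cos_two_mul]
      have := Real.sin_sq_add_cos_sq (π * y)
      nlinarith
    calc 2 * (d:ℝ) - 2 * ∑ i, Real.cos (2 * π * x i)
        = ∑ _i : Fin d, (2:ℝ) - ∑ i, 2 * Real.cos (2 * π * x i) := by
          rw [Finset.sum_const, Finset.card_univ, Fintype.card_fin, Finset.mul_sum]
          push_cast; ring
      _ = ∑ i, ((2:ℝ) - 2 * Real.cos (2 * π * x i)) := by
          rw [Finset.sum_sub_distrib]
      _ = ∑ i, 4 * Real.sin (π * x i) ^ 2 := by
          exact Finset.sum_congr rfl fun i _ => hterm (x i)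
  have hrw : (∫ x in S, (2 * (d:ℝ) - 2 * ∑ i, Real.cos (2 * π * x i))⁻¹)
      = ∫ x in S, (hydroQ d x)⁻¹ := by
    exact integral_congr_ae (ae_of_all _ fun x => hfun x)
  rw [hrw]
  rw [integral_eq_lintegral_of_nonneg_ae (ae_of_all _ fun x => inv_nonneg.2 (hydroQ_nonneg d x))
    ((hydroQ_cont d).measurable.inv).aestronglyMeasurable]
  have key : ∫⁻ x in S, ENNReal.ofReal (hydroQ d x)⁻¹ ≤ ENNReal.ofReal (8/((d:ℝ)+1)) := by
    have hc : Continuous fun p : (Fin d → ℝ) × ℝ => Real.exp (-(p.2 * hydroQ d p.1)) := by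
      have := hydroQ_cont d; fun_prop
    calc ∫⁻ x in S, ENNReal.ofReal (hydroQ d x)⁻¹
        ≤ ∫⁻ x in S, ∫⁻ t in Set.Ioi (0:ℝ), ENNReal.ofReal (Real.exp (-(t * hydroQ d x))) :=
          lintegral_mono fun x => hydro_inv_le_lintegral (hydroQ_nonneg d x)
      _ = ∫⁻ t in Set.Ioi (0:ℝ), ∫⁻ x in S, ENNReal.ofReal (Real.exp (-(t * hydroQ d x))) := by
          apply lintegral_lintegral_swap
          exact ((ENNReal.continuous_ofReal.comp hc).measurable).aemeasurable
      _ = ∫⁻ t in Set.Ioi (0:ℝ), ENNReal.ofReal (hydrophi t ^ d) :=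
          lintegral_congr fun t => hydro_cube_lintegral d t
      _ ≤ ENNReal.ofReal (8/((d:ℝ)+1)) := by
          rw [← Set.Ioc_union_Ioi_eq_Ioi (show (0:ℝ) ≤ 1/4 by norm_num),
            lintegral_union measurableSet_Ioi Set.Ioc_disjoint_Ioi_same]
          refine le_trans (add_le_add (hydro_tail1 d) (hydro_tail2 d hd)) ?_
          have h1 : (0:ℝ) < (d:ℝ) + 1 := by linarith
          have h2 : (0:ℝ) < (d:ℝ) - 2 := by linarith
          rw [← ENNReal.ofReal_add (by positivity) (by positivity)]
          apply ENNReal.ofReal_le_ofReal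
          have key2 : 1/(2*((d:ℝ)-2)) ≤ 7/((d:ℝ)+1) := by
            rw [div_le_div_iff₀ (by linarith) h1]
            linarith
          have : 1/((d:ℝ)+1) + 7/((d:ℝ)+1) = 8/((d:ℝ)+1) := by ring
          linarith
  calc (∫⁻ x in S, ENNReal.ofReal (hydroQ d x)⁻¹).toReal
      ≤ (ENNReal.ofReal (8/((d:ℝ)+1))).toReal :=
        ENNReal.toReal_mono ENNReal.ofReal_ne_top key
    _ = 8/((d:ℝ)+1) := ENNReal.toReal_ofReal (by positivity)
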